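/- Let λ > 0, 0 < p < 3/2, and define h : ℝ³ → ℝ by h(x₁,x₂,x₃) := λ(x₁² + x₂²)^p + x₃. Let ω ≠ 0 and let x(t) := (sin(ωt)/ω, (1 − cos(ωt))/ω, (ωt − sin(ωt))/ω²) be the trajectory of Brockett's non-holonomic integrator under the control (cos ωt, sin ωt) starting at the origin. Then there exists t̄ > 0 such that h(x(t)) > 0 for all t ∈ (0, t̄]; i.e., for p < 3/2 the spiralling trajectory violates the constraint h ≤ 0 immediately, no matter how the angular velocity ω is chosen. -/

import Mathlib

noncomputable section

/-- The first vector field of Brockett's non-holonomic integrator: `f₁(x) = (1, 0, −x₂)`. -/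
def brockF₁ (p : ℝ × ℝ × ℝ) : ℝ × ℝ × ℝ := (1, 0, -p.2.1)

/-- The second vector field of Brockett's non-holonomic integrator: `f₂(x) = (0, 1, x₁)`. -/
def brockF₂ (p : ℝ × ℝ × ℝ) : ℝ × ℝ × ℝ := (0, 1, p.1)

/-- The trajectory of Brockett's non-holonomic integrator starting at the origin under the
rotational control `(cos ωt, sin ωt)`. -/
def brockTraj (ω : ℝ) (t : ℝ) : ℝ × ℝ × ℝ :=
  (Real.sin (ω * t) / ω, (1 - Real.cos (ω * t)) / ω,
    (ω * t - Real.sin (ω * t)) / ω ^ 2)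

/-- The constraint function `h(x) = λ(x₁² + x₂²)^p + x₃`. -/
def brockCon (lam p : ℝ) (x : ℝ × ℝ × ℝ) : ℝ := lam * (x.1 ^ 2 + x.2.1 ^ 2) ^ p + x.2.2

lemma aux_sin (u : ℝ) (hu : |u| ≤ 1) : |u - Real.sin u| ≤ |u| ^ 3 / 4 := by
  have key : ∀ v : ℝ, 0 ≤ v → v ≤ 1 → |v - Real.sin v| ≤ |v| ^ 3 / 4 := by
    intro v hv0 hv1
    rcases eq_or_lt_of_le hv0 with h | h
    · simp [← h]
    · rw [abs_of_nonneg (by linarith [Real.sin_le hv0]), abs_of_nonneg hv0]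
      have := Real.sin_gt_sub_cube h
      linarith [pow_pos h 3]
  rcases le_or_gt 0 u with h | h
  · exact key u h (by rwa [abs_of_nonneg h] at hu)
  · have := key (-u) (by linarith) (by rwa [abs_of_neg h] at hu)
    rw [Real.sin_neg, abs_neg] at this
    calc |u - Real.sin u| = |-u - -Real.sin u| := by rw [← abs_neg]; ring_nf
    _ ≤ |u| ^ 3 / 4 := this

lemma aux_cos (u : ℝ) (hu : |u| ≤ 1) : u ^ 2 / 5 ≤ 1 - Real.cos u := by
  have hpi : |u| ≤ Real.pi := le_trans hu (by linarith [Real.pi_gt_three])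
  have h := Real.cos_le_one_sub_mul_cos_sq hpi
  have hpi2 : Real.pi ^ 2 < 10 := by nlinarith [Real.pi_lt_d2, Real.pi_gt_three]
  have hpos : (0:ℝ) < Real.pi ^ 2 := by positivity
  have : (1:ℝ)/5 ≤ 2 / Real.pi ^ 2 := by
    rw [div_le_div_iff₀ (by norm_num) hpos]; nlinarith
  nlinarith [sq_nonneg u]

/-- **Infeasibility of the spiral for `p < 3/2`.** Let `λ > 0`, `0 < p < 3/2`,
`h(x) = λ(x₁² + x₂²)^p + x₃`, and `ω ≠ 0`. Then the trajectory of Brockett's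
non-holonomic integrator under the control `(cos ωt, sin ωt)` starting at the origin
violates the constraint immediately: `h(x(t)) > 0` for all `t` in some interval
`(0, t̄]` with `t̄ > 0`, no matter how `ω` is chosen. -/
theorem brockett_spiral_infeasible (lam p ω : ℝ) (hlam : 0 < lam)
    (hp0 : 0 < p) (hp : p < 3 / 2) (hω : ω ≠ 0) :
    ∃ tbar > 0, ∀ t ∈ Set.Ioc (0:ℝ) tbar, 0 < brockCon lam p (brockTraj ω t) := by
  have he0 : (0:ℝ) < 3 - 2 * p := by linarith
  set e : ℝ := 3 - 2 * p with he
  have hω0 : 0 < |ω| := abs_pos.2 hω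
  set c : ℝ := (2/5 : ℝ) ^ p with hc
  have hc0 : 0 < c := Real.rpow_pos_of_pos (by norm_num) p
  set a : ℝ := 2 * lam * c / |ω| with ha
  have ha0 : 0 < a := by positivity
  refine ⟨min (1/|ω|) (a ^ (1/e)), lt_min (by positivity) (Real.rpow_pos_of_pos ha0 _), ?_⟩
  rintro t ⟨ht0, ht1⟩
  have htω : |ω| * t ≤ 1 := by
    have h := le_trans ht1 (min_le_left _ _)
    rw [le_div_iff₀ hω0] at h; linarith
  have hte : t ^ (e:ℝ) ≤ a := by
    have h1 : t ≤ a ^ (1/e) := le_trans ht1 (min_le_right _ _)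
    calc t ^ (e:ℝ) ≤ (a ^ (1/e)) ^ (e:ℝ) := Real.rpow_le_rpow ht0.le h1 he0.le
    _ = a := by rw [← Real.rpow_mul ha0.le, one_div_mul_cancel he0.ne', Real.rpow_one]
  set u := ω * t with hudef
  have hu1 : |u| ≤ 1 := by rw [hudef, abs_mul, abs_of_pos ht0]; exact htω
  have hsin := aux_sin u hu1
  have hcos := aux_cos u hu1
  have hω2 : (0:ℝ) < ω ^ 2 := by positivity
  have hsum : (Real.sin u / ω) ^ 2 + ((1 - Real.cos u) / ω) ^ 2
      = (2 - 2 * Real.cos u) / ω ^ 2 := by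
    field_simp
    nlinarith [Real.sin_sq_add_cos_sq u]
  simp only [brockCon, brockTraj]
  rw [hsum]
  have key1 : (2:ℝ)/5 * t ^ 2 ≤ (2 - 2 * Real.cos u) / ω ^ 2 := by
    rw [le_div_iff₀ hω2]
    have hu2 : u ^ 2 = ω ^ 2 * t ^ 2 := by rw [hudef]; ring
    nlinarith
  have key2 : lam * ((2:ℝ)/5 * t ^ 2) ^ p ≤ lam * ((2 - 2 * Real.cos u) / ω ^ 2) ^ p :=
    mul_le_mul_of_nonneg_left (Real.rpow_le_rpow (by positivity) key1 hp0.le) hlam.le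
  have key3 : ((2:ℝ)/5 * t ^ 2) ^ p = c * t ^ (2*p) := by
    rw [Real.mul_rpow (by norm_num) (by positivity)]
    congr 1
    rw [← Real.rpow_natCast t 2, ← Real.rpow_mul ht0.le]
    norm_num
  have key4 : -(|ω| * t ^ 3 / 4) ≤ (u - Real.sin u) / ω ^ 2 := by
    have habs : |(u - Real.sin u) / ω ^ 2| ≤ |ω| * t ^ 3 / 4 := by
      rw [abs_div, abs_of_pos hω2, div_le_iff₀ hω2]
      have h3 : |u| ^ 3 = |ω| ^ 3 * t ^ 3 := by
        rw [hudef, abs_mul, abs_of_pos ht0]; ring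
      have h4 : |ω| ^ 3 = |ω| * ω ^ 2 := by rw [← sq_abs]; ring
      calc |u - Real.sin u| ≤ |u| ^ 3 / 4 := hsin
      _ = |ω| * t ^ 3 / 4 * ω ^ 2 := by rw [h3, h4]; ring
    linarith [neg_abs_le ((u - Real.sin u) / ω ^ 2)]
  have htp : 0 < t ^ (2*p:ℝ) := Real.rpow_pos_of_pos ht0 _
  have key5 : |ω| * t ^ 3 / 4 < lam * (c * t ^ (2*p:ℝ)) := by
    have hten : (t:ℝ) ^ (3:ℕ) = t ^ ((3:ℝ)) := (Real.rpow_natCast t 3).symm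
    have h3 : t ^ ((3:ℝ)) = t ^ (2*p:ℝ) * t ^ (e:ℝ) := by
      rw [← Real.rpow_add ht0]; norm_num [he]
    have hb : |ω| * t ^ (e:ℝ) ≤ 2 * lam * c := by
      calc |ω| * t ^ (e:ℝ) ≤ |ω| * a := mul_le_mul_of_nonneg_left hte hω0.le
      _ = 2 * lam * c := by rw [ha]; field_simp
    calc |ω| * t ^ 3 / 4 = (|ω| * t ^ (e:ℝ)) * t ^ (2*p:ℝ) / 4 := by
          rw [hten, h3]; ring
    _ ≤ (2 * lam * c) * t ^ (2*p:ℝ) / 4 := by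
          apply div_le_div_of_nonneg_right _ (by norm_num)
          exact mul_le_mul_of_nonneg_right hb htp.le
          -- might need different lemma name
    _ < lam * (c * t ^ (2*p:ℝ)) := by nlinarith [mul_pos hlam (mul_pos hc0 htp)]
  rw [key3] at key2
  linarith


end
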